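/- Let m ≥ 1 be an odd integer and z a complex number with T_m(z) = 2 and z ≠ 2. Then S_{m−1}(z) = 0 and S_m(z) = 1, where S and T denote the Chebyshev polynomials of the second and first kind respectively. -/
import Mathlib


noncomputable def S : ℕ → ℂ → ℂ
  | 0 => fun _ => 1
  | 1 => fun q => q
  | (n + 2) => fun q => q * S (n + 1) q - S n q

noncomputable def T : ℕ → ℂ → ℂ
  | 0 => fun _ => 2
  | 1 => fun q => q
  | (n + 2) => fun q => q * T (n + 1) q - T n q

lemma T_formula (w v : ℂ) (h : w * v = 1) : ∀ n, T n (w + v) = w ^ n + v ^ n := by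
  intro n
  induction n using Nat.twoStepInduction with
  | zero => simp [T]; norm_num
  | one => simp [T]
  | more n ih1 ih2 =>
      show (w + v) * T (n + 1) (w + v) - T n (w + v) = _
      rw [ih2, ih1]
      ring_nf
      linear_combination (w ^ n + v ^ n) * h

lemma S_formula (w v : ℂ) (h : w * v = 1) :
    ∀ n, S n (w + v) * (w - v) = w ^ (n + 1) - v ^ (n + 1) := by
  intro n
  induction n using Nat.twoStepInduction with
  | zero => simp [S]
  | one => simp [S]; ring
  | more n ih1 ih2 =>
      show ((w + v) * S (n + 1) (w + v) - S n (w + v)) * (w - v) = _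
      linear_combination (w + v) * ih2 - ih1 + (w ^ (n + 1) - v ^ (n + 1)) * h

theorem stmt_19 (m : ℕ) (hm1 : 1 ≤ m) (hmo : Odd m) (z : ℂ)
    (hT : T m z = 2) (hz : z ≠ 2) :
    S (m - 1) z = 0 ∧ S m z = 1 := by
  obtain ⟨w, v, hwv, hzwv⟩ : ∃ w v : ℂ, w * v = 1 ∧ z = w + v := by
    obtain ⟨s, hs⟩ := IsAlgClosed.exists_pow_nat_eq (z ^ 2 - 4) (n := 2) two_pos
    refine ⟨(z + s) / 2, (z - s) / 2, ?_, by ring⟩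
    field_simp
    linear_combination -hs
  subst hzwv
  have hTm : w ^ m + v ^ m = 2 := by rw [← T_formula w v hwv m]; exact hT
  by_cases hwe : w = v
  · exfalso
    subst hwe
    have hw2 : (w - 1) * (w + 1) = 0 := by linear_combination hwv - 1
    rcases mul_eq_zero.mp hw2 with h1 | h1
    · exact hz (by rw [sub_eq_zero.mp h1]; norm_num)
    · rw [eq_neg_of_add_eq_zero_left h1, hmo.neg_one_pow] at hTm
      norm_num at hTm
  · have hne : w - v ≠ 0 := sub_ne_zero.mpr hwe
    have heq : w ^ m = v ^ m := by
      have hsq : (w ^ m - v ^ m) ^ 2 = 0 := by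
        have hp : (w * v) ^ m = 1 := by rw [hwv, one_pow]
        have hp' : w ^ m * v ^ m = 1 := by rw [← mul_pow]; exact hp
        linear_combination (w ^ m + v ^ m + 2) * hTm - 4 * hp'
      exact sub_eq_zero.mp (pow_eq_zero_iff (n := 2) (by norm_num) |>.mp hsq)
    have hw1 : w ^ m = 1 := by linear_combination hTm / 2 + heq / 2
    have hv1 : v ^ m = 1 := heq ▸ hw1
    constructor
    · have h0 := S_formula w v hwv (m - 1)
      rw [Nat.sub_add_cancel hm1, hw1, hv1, sub_self] at h0
      exact (mul_eq_zero.mp h0).resolve_right hne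
    · have h1 := S_formula w v hwv m
      have : w ^ (m + 1) - v ^ (m + 1) = w - v := by
        rw [pow_succ, pow_succ, hw1, hv1, one_mul, one_mul]
      rw [this] at h1
      exact mul_right_cancel₀ hne (by rw [h1, one_mul])
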